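/- For any G_n ∈ HL_n with n ≥ 8 and any g ≤ 2^{⌈n/2⌉}, the (g+1)-component edge connectivity satisfies cλ_{g+1}(G_n) ≤ n·g − e(g), where e(g) = Σ_{i=0}^{s} t_i·2^{t_i−1} + Σ_{i=0}^{s} i·2^{t_i} with g = Σ 2^{t_i} the binary expansion. -/

import Mathlib

/-- The strictly decreasing list of exponents `t_0 > t_1 > ⋯ > t_s` in the
binary expansion `g = Σ_{i=0}^{s} 2^(t_i)` of `g`. -/
def expList (g : ℕ) : List ℕ :=
  (((Finset.range (g + 1)).filter (fun k => g.testBit k)).sort (· ≤ ·)).reverse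

/-- `e g = Σ_{i=0}^{s} t_i·2^(t_i−1) + Σ_{i=0}^{s} i·2^(t_i)` over the binary
expansion `g = Σ_{i=0}^{s} 2^(t_i)` with `t_0 > t_1 > ⋯ > t_s ≥ 0` (and `e 0 = 0`). -/
def eHL (g : ℕ) : ℕ :=
  ((expList g).zipIdx.map (fun p => p.1 * 2 ^ (p.1 - 1) + p.2 * 2 ^ p.1)).sum

/-- Vertex type of `n`-dimensional HL-networks: `2^n` vertices. -/
def HLV : ℕ → Type
  | 0 => Unit
  | n + 1 => Bool × HLV n

instance HLV.fintype : ∀ n, Fintype (HLV n)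
  | 0 => inferInstanceAs (Fintype Unit)
  | n + 1 => letI := HLV.fintype n; inferInstanceAs (Fintype (Bool × HLV n))

/-- Join two graphs on the same vertex type by a perfect matching given by a
bijection `f`: the result lives on `Bool × V`, with the copy `false` carrying `G`,
the copy `true` carrying `G'`, and matching edges between `(false, v)` and `(true, f v)`. -/
def matchingJoin {V : Type} (G G' : SimpleGraph V) (f : V ≃ V) :
    SimpleGraph (Bool × V) where
  Adj x y :=
    (x.1 = false ∧ y.1 = false ∧ G.Adj x.2 y.2) ∨
    (x.1 = true ∧ y.1 = true ∧ G'.Adj x.2 y.2) ∨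
    (x.1 = false ∧ y.1 = true ∧ y.2 = f x.2) ∨
    (x.1 = true ∧ y.1 = false ∧ x.2 = f y.2)
  symm := by
    constructor
    rintro ⟨a, u⟩ ⟨b, v⟩ h
    dsimp at h ⊢
    rcases h with ⟨h1, h2, h3⟩ | ⟨h1, h2, h3⟩ | ⟨h1, h2, h3⟩ | ⟨h1, h2, h3⟩
    · exact Or.inl ⟨h2, h1, h3.symm⟩
    · exact Or.inr (Or.inl ⟨h2, h1, h3.symm⟩)
    · exact Or.inr (Or.inr (Or.inr ⟨h2, h1, h3⟩))
    · exact Or.inr (Or.inr (Or.inl ⟨h2, h1, h3⟩))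
  loopless := by
    constructor
    rintro ⟨a, u⟩ h
    dsimp at h
    rcases h with ⟨_, _, h3⟩ | ⟨_, _, h3⟩ | ⟨h1, h2, _⟩ | ⟨h1, h2, _⟩
    · exact G.loopless.irrefl u h3
    · exact G'.loopless.irrefl u h3
    · simp_all
    · simp_all

/-- The class of `n`-dimensional hypercube-like networks (HL-networks):
`HL 1 = {K₂}`, and the members of `HL (n+1)` are exactly the graphs obtained by
joining two members of `HL n` by a perfect matching. -/
inductive IsHL : (n : ℕ) → SimpleGraph (HLV n) → Prop
  | base : IsHL 1 ⊤
  | step {n : ℕ} {G G' : SimpleGraph (HLV n)} (f : HLV n ≃ HLV n) :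
      IsHL n G → IsHL n G' → IsHL (n + 1) (matchingJoin G G' f)

/-- The `g`-component edge connectivity `cλ_g(G)`: the least size of a set `F`
of edges of `G` whose deletion leaves a graph with at least `g` connected
components. -/
noncomputable def cLambda {V : Type} (G : SimpleGraph V) (g : ℕ) : ℕ :=
  sInf {k | ∃ F : Set (Sym2 V), F ⊆ G.edgeSet ∧ F.ncard = k ∧
    g ≤ Nat.card ((G.deleteEdges F).ConnectedComponent)}

lemma expList_zero : expList 0 = [] := by
  have : ((Finset.range 1).filter (fun k => Nat.testBit 0 k)) = ∅ := by
    ext k; simp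
  rw [expList, this, Finset.sort_empty]
  rfl

lemma eHL_zero : eHL 0 = 0 := by rw [eHL, expList_zero]; rfl

lemma expList_two_pow_add {m r : ℕ} (h : r < 2 ^ m) :
    expList (2 ^ m + r) = m :: expList r := by
  have hfil : ((Finset.range (2 ^ m + r + 1)).filter (fun k => (2 ^ m + r).testBit k))
      = insert m ((Finset.range (r + 1)).filter (fun k => r.testBit k)) := by
    ext k
    simp only [Finset.mem_filter, Finset.mem_range, Finset.mem_insert]
    rcases lt_trichotomy k m with hk | rfl | hk
    · rw [Nat.testBit_two_pow_add_gt hk]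
      constructor
      · rintro ⟨-, hb⟩
        have h1 : 2 ^ k ≤ r := Nat.ge_two_pow_of_testBit hb
        have h2 : k < 2 ^ k := Nat.lt_two_pow_self
        exact Or.inr ⟨by omega, hb⟩
      · rintro (rfl | ⟨hlt, hb⟩)
        · omega
        · exact ⟨by omega, hb⟩
    · have hb : r.testBit k = false := Nat.testBit_lt_two_pow h
      rw [Nat.testBit_two_pow_add_eq, hb]
      have h2 : k < 2 ^ k := Nat.lt_two_pow_self
      simp [hb]
      omega
    · have h1 : 2 ^ m + r < 2 ^ k := by
        have h3 : 2 ^ (m + 1) ≤ 2 ^ k := Nat.pow_le_pow_right (by norm_num) hk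
        rw [pow_succ] at h3
        omega
      have hb1 : (2 ^ m + r).testBit k = false := Nat.testBit_lt_two_pow h1
      have hb2 : r.testBit k = false := Nat.testBit_lt_two_pow (by omega)
      simp [hb1, hb2]
      omega
  have hmem : m ∉ ((Finset.range (r + 1)).filter (fun k => r.testBit k)) := by
    simp [Nat.testBit_lt_two_pow h]
  have hlt : ∀ b ∈ ((Finset.range (r + 1)).filter (fun k => r.testBit k)), b ≤ m := by
    intro b hb
    simp only [Finset.mem_filter] at hb
    have h1 : 2 ^ b ≤ r := Nat.ge_two_pow_of_testBit hb.2
    have h2 : 2 ^ b < 2 ^ m := by omega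
    exact le_of_lt (Nat.pow_lt_pow_iff_right (by norm_num) |>.mp h2)
  have hsort : ((insert m ((Finset.range (r + 1)).filter (fun k => r.testBit k))).sort (· ≤ ·))
      = ((Finset.range (r + 1)).filter (fun k => r.testBit k)).sort (· ≤ ·) ++ [m] := by
    set T := ((Finset.range (r + 1)).filter (fun k => r.testBit k)) with hT
    have hperm : List.Perm ((insert m T).sort (· ≤ ·)) (T.sort (· ≤ ·) ++ [m]) := by
      refine ((Finset.sort_perm_toList _ _).trans ?_)
      refine ((Finset.toList_insert hmem).trans ?_)
      refine (List.Perm.cons _ (Finset.sort_perm_toList (s := T) (r := (· ≤ ·))).symm).trans ?_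
      exact (List.perm_append_comm (l₁ := [m]) (l₂ := T.sort (· ≤ ·)))
    refine List.Perm.eq_of_pairwise' (Finset.pairwise_sort _ _) ?_ hperm
    rw [List.pairwise_append]
    refine ⟨Finset.pairwise_sort _ _, List.pairwise_singleton _ m, ?_⟩
    intro x hx y hy
    simp only [List.mem_singleton] at hy
    subst hy
    exact hlt x ((Finset.mem_sort (α := ℕ) (· ≤ ·)).mp hx)
  rw [expList, hfil, hsort, expList]
  simp

lemma list_sum_map_add {α : Type*} (l : List α) (u v : α → ℕ) :
    (l.map (fun x => u x + v x)).sum = (l.map u).sum + (l.map v).sum := by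
  induction l with
  | nil => simp
  | cons a l ih => simp [ih]; ring

lemma sum_two_pow_expList (g : ℕ) : ((expList g).map (fun t => 2 ^ t)).sum = g := by
  induction g using Nat.strong_induction_on with
  | _ g ih =>
    rcases Nat.eq_zero_or_pos g with rfl | hg
    · simp [expList_zero]
    · have h1 : 2 ^ Nat.log 2 g ≤ g := Nat.pow_log_le_self 2 (by omega)
      have h2 : g < 2 ^ (Nat.log 2 g + 1) := Nat.lt_pow_succ_log_self (by norm_num) g
      rw [pow_succ] at h2
      have hr : g - 2 ^ Nat.log 2 g < 2 ^ Nat.log 2 g := by omega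
      have hg' : g = 2 ^ Nat.log 2 g + (g - 2 ^ Nat.log 2 g) := by omega
      rw [hg', expList_two_pow_add hr]
      have h0 : 0 < 2 ^ Nat.log 2 g := Nat.pow_pos (by norm_num)
      rw [List.map_cons, List.sum_cons, ih (g - 2 ^ Nat.log 2 g) (by omega)]

lemma eHL_two_pow_add {m r : ℕ} (h : r < 2 ^ m) :
    eHL (2 ^ m + r) = m * 2 ^ (m - 1) + r + eHL r := by
  rw [eHL, expList_two_pow_add h, List.zipIdx_cons', List.map_cons, List.sum_cons, List.map_map]
  have hfe : ((fun p : ℕ × ℕ => p.1 * 2 ^ (p.1 - 1) + p.2 * 2 ^ p.1) ∘ Prod.map id (· + 1))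
      = fun p : ℕ × ℕ => (p.1 * 2 ^ (p.1 - 1) + p.2 * 2 ^ p.1) + 2 ^ p.1 := by
    funext p
    rcases p with ⟨t, i⟩
    simp [Prod.map]
    ring
  rw [hfe, list_sum_map_add]
  have hsnd : ((expList r).zipIdx.map (fun p : ℕ × ℕ => 2 ^ p.1)).sum = r := by
    have h1 : (expList r).zipIdx.map (fun p : ℕ × ℕ => 2 ^ p.1)
        = ((expList r).zipIdx.map Prod.fst).map (fun t => 2 ^ t) := by
      rw [List.map_map]; rfl
    rw [h1, List.zipIdx_map_fst, sum_two_pow_expList]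
  rw [hsnd, ← eHL]
  ring

lemma eHL_eq_of_between {m g : ℕ} (h1 : 2 ^ m ≤ g) (h2 : g ≤ 2 ^ (m + 1)) :
    eHL g = m * 2 ^ (m - 1) + (g - 2 ^ m) + eHL (g - 2 ^ m) := by
  rcases eq_or_lt_of_le h2 with rfl | hlt
  · -- g = 2^(m+1)
    have e1 : eHL (2 ^ (m + 1)) = (m + 1) * 2 ^ m := by
      have := eHL_two_pow_add (m := m + 1) (r := 0) (Nat.pow_pos (by norm_num))
      simpa [eHL_zero] using this
    have e2 : eHL (2 ^ m) = m * 2 ^ (m - 1) := by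
      have := eHL_two_pow_add (m := m) (r := 0) (Nat.pow_pos (by norm_num))
      simpa [eHL_zero] using this
    have e3 : 2 ^ (m + 1) - 2 ^ m = 2 ^ m := by
      rw [pow_succ]; omega
    rw [e1, e3, e2]
    rcases Nat.eq_zero_or_pos m with rfl | hm
    · norm_num
    · have e4 : 2 ^ m = 2 ^ (m - 1) * 2 := by
        rw [← pow_succ]; congr 1; omega
      rw [e4]; ring
  · have hr : g - 2 ^ m < 2 ^ m := by rw [pow_succ] at hlt; omega
    have hg' : g = 2 ^ m + (g - 2 ^ m) := by omega
    conv_lhs => rw [hg']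
    exact eHL_two_pow_add hr

instance HLV.decEq : ∀ n, DecidableEq (HLV n)
  | 0 => inferInstanceAs (DecidableEq Unit)
  | n + 1 => letI := HLV.decEq n; inferInstanceAs (DecidableEq (Bool × HLV n))

open scoped Classical

lemma hlv_card : ∀ n, Fintype.card (HLV n) = 2 ^ n
  | 0 => rfl
  | n + 1 => by
    show Fintype.card (Bool × HLV n) = 2 ^ (n + 1)
    rw [Fintype.card_prod, hlv_card n]
    simp [pow_succ]
    ring

lemma matchingJoin_adj {V : Type} (G G' : SimpleGraph V) (f : V ≃ V) (x y : Bool × V) :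
    (matchingJoin G G' f).Adj x y ↔
    ((x.1 = false ∧ y.1 = false ∧ G.Adj x.2 y.2) ∨
    (x.1 = true ∧ y.1 = true ∧ G'.Adj x.2 y.2) ∨
    (x.1 = false ∧ y.1 = true ∧ y.2 = f x.2) ∨
    (x.1 = true ∧ y.1 = false ∧ x.2 = f y.2)) := Iff.rfl

/-- neighbor finset (classical) -/
noncomputable def nbr {V : Type} [Fintype V] (G : SimpleGraph V) (v : V) : Finset V :=
  Finset.univ.filter (fun w => G.Adj v w)

lemma nbr_card_le {n : ℕ} {G : SimpleGraph (HLV n)} (hG : IsHL n G) (v : HLV n) :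
    (nbr G v).card ≤ n := by
  induction hG with
  | base =>
    have hsub : nbr (⊤ : SimpleGraph (HLV 1)) v ⊆ Finset.univ.erase v := by
      intro w hw
      simp only [nbr, Finset.mem_filter, SimpleGraph.top_adj] at hw
      exact Finset.mem_erase.mpr ⟨hw.2.symm, Finset.mem_univ _⟩
    calc (nbr (⊤ : SimpleGraph (HLV 1)) v).card ≤ (Finset.univ.erase v).card :=
          Finset.card_le_card hsub
      _ = Fintype.card (HLV 1) - 1 := by
          rw [Finset.card_erase_of_mem (Finset.mem_univ _), Finset.card_univ]
      _ ≤ 1 := by rw [hlv_card]; norm_num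
  | @step m G G' f h1 h2 ih1 ih2 =>
    rcases v with ⟨b, u⟩
    cases b
    · have hsub : nbr (matchingJoin G G' f) (false, u) ⊆
          (nbr G u).image (Prod.mk false) ∪ {(true, f u)} := by
        rintro ⟨c, w⟩ hw
        simp only [nbr, Finset.mem_filter, Finset.mem_univ, true_and,
          matchingJoin_adj] at hw
        rcases hw with ⟨h2', h3'⟩ | ⟨hF, -⟩ | ⟨h2', h3'⟩ | ⟨hF, -⟩
        · subst h2'
          exact Finset.mem_union_left _ (Finset.mem_image.mpr
            ⟨w, by simp [nbr, h3'], rfl⟩)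
        · simp at hF
        · subst h2' h3'
          exact Finset.mem_union_right _ (by simp)
        · simp at hF
      calc (nbr (matchingJoin G G' f) (false, u)).card
          ≤ ((nbr G u).image (Prod.mk false) ∪ {(true, f u)}).card :=
            Finset.card_le_card hsub
        _ ≤ ((nbr G u).image (Prod.mk false)).card + 1 :=
            le_trans (Finset.card_union_le _ _) (by simp)
        _ ≤ m + 1 := by
            have := Finset.card_image_le (s := nbr G u) (f := Prod.mk false)
            have := ih1 u
            omega
    · have hsub : nbr (matchingJoin G G' f) (true, u) ⊆
          (nbr G' u).image (Prod.mk true) ∪ {(false, f.symm u)} := by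
        rintro ⟨c, w⟩ hw
        simp only [nbr, Finset.mem_filter, Finset.mem_univ, true_and,
          matchingJoin_adj] at hw
        rcases hw with ⟨hF, -⟩ | ⟨h2', h3'⟩ | ⟨hF, -⟩ | ⟨h2', h3'⟩
        · simp at hF
        · subst h2'
          exact Finset.mem_union_left _ (Finset.mem_image.mpr
            ⟨w, by simp [nbr, h3'], rfl⟩)
        · simp at hF
        · subst h2'
          have : w = f.symm u := by
            apply f.injective
            simp [← h3']
          subst this
          exact Finset.mem_union_right _ (by simp)
      calc (nbr (matchingJoin G G' f) (true, u)).card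
          ≤ ((nbr G' u).image (Prod.mk true) ∪ {(false, f.symm u)}).card :=
            Finset.card_le_card hsub
        _ ≤ ((nbr G' u).image (Prod.mk true)).card + 1 :=
            le_trans (Finset.card_union_le _ _) (by simp)
        _ ≤ m + 1 := by
            have := Finset.card_image_le (s := nbr G' u) (f := Prod.mk true)
            have := ih2 u
            omega

/-- edges of `G` with both endpoints in `S` -/
noncomputable def inE {V : Type} [Fintype V] (G : SimpleGraph V) (S : Finset V) :
    Finset (Sym2 V) :=
  Finset.univ.filter (fun e => e ∈ G.edgeSet ∧ ∀ v ∈ e, v ∈ S)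

/-- edges of `G` with at least one endpoint in `S` -/
noncomputable def touchE {V : Type} [Fintype V] (G : SimpleGraph V) (S : Finset V) :
    Finset (Sym2 V) :=
  Finset.univ.filter (fun e => e ∈ G.edgeSet ∧ ∃ v ∈ e, v ∈ S)

lemma inE_subset_touchE {V : Type} [Fintype V] (G : SimpleGraph V) (S : Finset V) :
    inE G S ⊆ touchE G S := by
  intro e he
  simp only [inE, touchE, Finset.mem_filter, Finset.mem_univ, true_and] at he ⊢
  induction e using Sym2.ind with
  | _ a b => exact ⟨he.1, a, Sym2.mem_mk_left a b, he.2 a (Sym2.mem_mk_left a b)⟩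

lemma count_key {V : Type} [Fintype V] (G : SimpleGraph V) (S : Finset V) {n : ℕ}
    (hdeg : ∀ v, (nbr G v).card ≤ n) :
    (touchE G S).card + (inE G S).card ≤ n * S.card := by
  classical
  set D := Finset.univ.filter (fun p : V × V => G.Adj p.1 p.2 ∧ p.1 ∈ S) with hD
  have hA : D.card ≤ n * S.card := by
    have h1 : D.card = ∑ v ∈ S, (D.filter (fun p => p.1 = v)).card := by
      apply Finset.card_eq_sum_card_fiberwise
      intro p hp
      rw [hD, Finset.mem_coe, Finset.mem_filter] at hp
      exact hp.2.2
    rw [h1]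
    calc ∑ v ∈ S, (D.filter (fun p => p.1 = v)).card ≤ ∑ v ∈ S, n := by
          apply Finset.sum_le_sum
          intro v hv
          refine le_trans (Finset.card_le_card_of_injOn (fun p => p.2) ?_ ?_) (hdeg v)
          · intro p hp
            simp only [hD, Finset.mem_coe, Finset.mem_filter, Finset.mem_univ, true_and] at hp
            obtain ⟨⟨hadj, -⟩, hfst⟩ := hp
            subst hfst
            simp [nbr, hadj]
          · intro p hp q hq hpq
            simp only [Finset.mem_coe, Finset.mem_filter] at hp hq
            exact Prod.ext (hp.2.trans hq.2.symm) hpq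
      _ = n * S.card := by rw [Finset.sum_const, smul_eq_mul, mul_comm]
  have hB : (touchE G S).card + (inE G S).card ≤ D.card := by
    have h1 : D.card = ∑ e ∈ touchE G S, (D.filter (fun p => s(p.1, p.2) = e)).card := by
      apply Finset.card_eq_sum_card_fiberwise
      intro p hp
      rw [hD, Finset.mem_coe, Finset.mem_filter] at hp
      simp only [touchE, Finset.mem_coe, Finset.mem_filter, Finset.mem_univ, true_and]
      exact ⟨(SimpleGraph.mem_edgeSet G).mpr hp.2.1, p.1, Sym2.mem_mk_left _ _, hp.2.2⟩
    have h2 : ∀ e ∈ touchE G S,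
        (if e ∈ inE G S then 2 else 1) ≤ (D.filter (fun p => s(p.1, p.2) = e)).card := by
      intro e
      induction e using Sym2.ind with
      | _ a b =>
        intro he
        simp only [touchE, Finset.mem_filter, Finset.mem_univ, true_and,
          SimpleGraph.mem_edgeSet] at he
        obtain ⟨hadj, hex⟩ := he
        split_ifs with hin
        · simp only [inE, Finset.mem_filter, Finset.mem_univ, true_and,
            SimpleGraph.mem_edgeSet] at hin
          have haS : a ∈ S := hin.2 a (Sym2.mem_mk_left a b)
          have hbS : b ∈ S := hin.2 b (Sym2.mem_mk_right a b)
          have hsub : ({(a, b), (b, a)} : Finset (V × V)) ⊆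
              D.filter (fun p => s(p.1, p.2) = s(a, b)) := by
            intro p hp
            simp only [Finset.mem_insert, Finset.mem_singleton] at hp
            rcases hp with rfl | rfl
            · simp only [hD, Finset.mem_filter, Finset.mem_univ, true_and]
              exact ⟨⟨hadj, haS⟩, trivial⟩
            · simp only [hD, Finset.mem_filter, Finset.mem_univ, true_and]
              exact ⟨⟨hadj.symm, hbS⟩, Sym2.eq_swap⟩
          have hcard : ({(a, b), (b, a)} : Finset (V × V)).card = 2 := by
            rw [Finset.card_insert_of_notMem, Finset.card_singleton]
            simp only [Finset.mem_singleton]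
            intro hc
            exact hadj.ne (congrArg Prod.fst hc)
          rw [← hcard]
          exact Finset.card_le_card hsub
        · rw [Nat.one_le_iff_ne_zero, ← Nat.pos_iff_ne_zero, Finset.card_pos]
          obtain ⟨v, hv, hvS⟩ := hex
          rw [Sym2.mem_iff] at hv
          rcases hv with rfl | rfl
          · exact ⟨(v, b), by
              simp only [hD, Finset.mem_filter, Finset.mem_univ, true_and]
              exact ⟨⟨hadj, hvS⟩, trivial⟩⟩
          · exact ⟨(v, a), by
              simp only [hD, Finset.mem_filter, Finset.mem_univ, true_and]
              exact ⟨⟨hadj.symm, hvS⟩, Sym2.eq_swap⟩⟩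
    calc (touchE G S).card + (inE G S).card
        = ∑ e ∈ touchE G S, (if e ∈ inE G S then 2 else 1) := by
          have h3 : ∀ e ∈ touchE G S, (if e ∈ inE G S then 2 else 1)
              = 1 + (if e ∈ inE G S then 1 else 0) := by
            intro e _
            split_ifs <;> rfl
          rw [Finset.sum_congr rfl h3, Finset.sum_add_distrib, Finset.sum_const,
            smul_eq_mul, mul_one, ← Finset.card_filter]
          congr 1
          rw [Finset.filter_mem_eq_inter, Finset.inter_eq_right.mpr (inE_subset_touchE G S)]
      _ ≤ ∑ e ∈ touchE G S, (D.filter (fun p => s(p.1, p.2) = e)).card :=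
          Finset.sum_le_sum h2
      _ = D.card := h1.symm
  omega

lemma eHL_two_pow (m : ℕ) : eHL (2 ^ m) = m * 2 ^ (m - 1) := by
  have := eHL_two_pow_add (m := m) (r := 0) (Nat.pow_pos (by norm_num))
  simpa [eHL_zero] using this

lemma eHL_one : eHL 1 = 0 := by
  have := eHL_two_pow 0
  simpa using this

lemma prodmk_inj {V : Type} (b : Bool) : Function.Injective (Prod.mk b : V → Bool × V) :=
  fun u v h => congrArg Prod.snd h

lemma dense_subgraph {n : ℕ} {G : SimpleGraph (HLV n)} (hG : IsHL n G) :
    ∀ g, g ≤ 2 ^ n → ∃ S : Finset (HLV n), S.card = g ∧ eHL g ≤ (inE G S).card := by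
  induction hG with
  | base =>
    intro g hg
    norm_num at hg
    rcases Nat.lt_or_ge g 2 with hg2 | hg2
    · obtain ⟨S, -, hScard⟩ := Finset.exists_subset_card_eq
        (s := (Finset.univ : Finset (HLV 1))) (n := g)
        (by rw [Finset.card_univ, hlv_card]; omega)
      refine ⟨S, hScard, ?_⟩
      interval_cases g
      · simp [eHL_zero]
      · simp [eHL_one]
    · have hg2' : g = 2 := by omega
      subst hg2'
      have hcard2 : 1 < Fintype.card (HLV 1) := by rw [hlv_card]; norm_num
      obtain ⟨a, b, hab⟩ := Fintype.exists_pair_of_one_lt_card hcard2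
      refine ⟨Finset.univ, by rw [Finset.card_univ, hlv_card]; norm_num, ?_⟩
      have he2 : eHL 2 = 1 := by
        have := eHL_two_pow 1
        simpa using this
      rw [he2]
      rw [Nat.one_le_iff_ne_zero, ← Nat.pos_iff_ne_zero, Finset.card_pos]
      refine ⟨s(a, b), ?_⟩
      simp only [inE, Finset.mem_filter, Finset.mem_univ, true_and]
      refine ⟨?_, by simp⟩
      rw [SimpleGraph.mem_edgeSet]
      exact hab
  | @step m G G' f h1 h2 ih1 ih2 =>
    intro g hg
    rcases Nat.lt_or_ge (2 ^ m) g with hbig | hsmall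
    -- big case : 2^m < g ≤ 2^(m+1)
    · have hpow : (2 : ℕ) ^ (m + 1) = 2 ^ m + 2 ^ m := by rw [pow_succ]; omega
      set r := g - 2 ^ m with hr
      have hrle : r ≤ 2 ^ m := by omega
      obtain ⟨S0, hS0card, hS0e⟩ := ih1 (2 ^ m) le_rfl
      have hS0univ : S0 = Finset.univ := by
        apply Finset.eq_univ_of_card
        rw [hS0card, hlv_card]
      rw [hS0univ] at hS0e
      obtain ⟨S', hS'card, hS'e⟩ := ih2 r hrle
      set J := matchingJoin G G' f with hJ
      set Sbig : Finset (Bool × HLV m) :=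
        (Finset.univ.image (Prod.mk false)) ∪ (S'.image (Prod.mk true)) with hSbig
      have hdisjS : Disjoint (Finset.univ.image (Prod.mk false : HLV m → Bool × HLV m))
          (S'.image (Prod.mk true)) := by
        rw [Finset.disjoint_left]
        rintro x hx hx'
        obtain ⟨u, -, rfl⟩ := Finset.mem_image.mp hx
        obtain ⟨v, -, hv⟩ := Finset.mem_image.mp hx'
        exact Bool.false_ne_true (congrArg Prod.fst hv.symm)
      have hSbigcard : Sbig.card = g := by
        rw [hSbig, Finset.card_union_of_disjoint hdisjS,
          Finset.card_image_of_injective _ (prodmk_inj false),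
          Finset.card_image_of_injective _ (prodmk_inj true),
          Finset.card_univ, hlv_card, hS'card]
        omega
      set T1 := (inE G Finset.univ).image (Sym2.map (Prod.mk false)) with hT1
      set T2 := (inE G' S').image (Sym2.map (Prod.mk true)) with hT2
      set T3 := S'.image
        (fun v => s(((false, f.symm v) : Bool × HLV m), (true, v))) with hT3
      -- membership shapes
      have hT1shape : ∀ e ∈ T1, ∃ a b, G.Adj a b ∧ e = s(((false, a) : Bool × HLV m), (false, b)) := by
        intro e he
        obtain ⟨e0, he0, rfl⟩ := Finset.mem_image.mp he
        induction e0 using Sym2.ind with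
        | _ a b =>
          simp only [inE, Finset.mem_filter, Finset.mem_univ, true_and,
            SimpleGraph.mem_edgeSet] at he0
          exact ⟨a, b, he0.1, by rw [Sym2.map_pair_eq]⟩
      have hT2shape : ∀ e ∈ T2, ∃ a b, G'.Adj a b ∧ a ∈ S' ∧ b ∈ S' ∧
          e = s(((true, a) : Bool × HLV m), (true, b)) := by
        intro e he
        obtain ⟨e0, he0, rfl⟩ := Finset.mem_image.mp he
        induction e0 using Sym2.ind with
        | _ a b =>
          simp only [inE, Finset.mem_filter, Finset.mem_univ, true_and,
            SimpleGraph.mem_edgeSet] at he0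
          exact ⟨a, b, he0.1, he0.2 a (Sym2.mem_mk_left a b),
            he0.2 b (Sym2.mem_mk_right a b), by rw [Sym2.map_pair_eq]⟩
      -- subsets
      have hsub : T1 ∪ T2 ∪ T3 ⊆ inE J Sbig := by
        intro e he
        simp only [inE, Finset.mem_filter, Finset.mem_univ, true_and]
        rcases Finset.mem_union.mp he with he' | he3
        · rcases Finset.mem_union.mp he' with he1 | he2
          · obtain ⟨a, b, hadj, rfl⟩ := hT1shape e he1
            constructor
            · rw [SimpleGraph.mem_edgeSet, hJ, matchingJoin_adj]
              exact Or.inl ⟨rfl, rfl, hadj⟩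
            · intro v hv
              rw [Sym2.mem_iff] at hv
              rcases hv with rfl | rfl <;>
                exact Finset.mem_union_left _
                  (Finset.mem_image.mpr ⟨_, Finset.mem_univ _, rfl⟩)
          · obtain ⟨a, b, hadj, haS, hbS, rfl⟩ := hT2shape e he2
            constructor
            · rw [SimpleGraph.mem_edgeSet, hJ, matchingJoin_adj]
              exact Or.inr (Or.inl ⟨rfl, rfl, hadj⟩)
            · intro v hv
              rw [Sym2.mem_iff] at hv
              rcases hv with rfl | rfl
              · exact Finset.mem_union_right _ (Finset.mem_image.mpr ⟨a, haS, rfl⟩)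
              · exact Finset.mem_union_right _ (Finset.mem_image.mpr ⟨b, hbS, rfl⟩)
        · obtain ⟨v, hvS, rfl⟩ := Finset.mem_image.mp he3
          constructor
          · rw [SimpleGraph.mem_edgeSet, hJ, matchingJoin_adj]
            exact Or.inr (Or.inr (Or.inl ⟨rfl, rfl, by simp⟩))
          · intro w hw
            rw [Sym2.mem_iff] at hw
            rcases hw with rfl | rfl
            · exact Finset.mem_union_left _
                (Finset.mem_image.mpr ⟨_, Finset.mem_univ _, rfl⟩)
            · exact Finset.mem_union_right _ (Finset.mem_image.mpr ⟨v, hvS, rfl⟩)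
      -- disjointness
      have hd12 : Disjoint T1 T2 := by
        rw [Finset.disjoint_left]
        intro e he1 he2
        obtain ⟨a, b, -, heq1⟩ := hT1shape e he1
        obtain ⟨c, d, -, -, -, heq2⟩ := hT2shape e he2
        rw [heq1, Sym2.eq_iff] at heq2
        rename_i heqX
        rcases heq2 with ⟨h', -⟩ | ⟨h', -⟩ <;>
          exact Bool.false_ne_true (congrArg Prod.fst h')
      have hd3 : Disjoint (T1 ∪ T2) T3 := by
        rw [Finset.disjoint_left]
        intro e he he3
        obtain ⟨v, -, rfl⟩ := Finset.mem_image.mp he3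
        rcases Finset.mem_union.mp he with he1 | he2
        · obtain ⟨a, b, -, heq⟩ := hT1shape _ he1
          rw [Sym2.eq_iff] at heq
          rcases heq with ⟨-, h'⟩ | ⟨-, h'⟩ <;>
            exact absurd (congrArg Prod.fst h') (by simp)
        · obtain ⟨a, b, -, -, -, heq⟩ := hT2shape _ he2
          rw [Sym2.eq_iff] at heq
          rcases heq with ⟨h', -⟩ | ⟨h', -⟩ <;>
            exact absurd (congrArg Prod.fst h') (by simp)
      -- cardinalities
      have hc1 : T1.card = (inE G Finset.univ).card :=
        Finset.card_image_of_injective _ (Sym2.map.injective (prodmk_inj false))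
      have hc2 : T2.card = (inE G' S').card :=
        Finset.card_image_of_injective _ (Sym2.map.injective (prodmk_inj true))
      have hc3 : T3.card = r := by
        rw [hT3, Finset.card_image_of_injOn, hS'card]
        intro v _ w _ hvw
        rw [Sym2.eq_iff] at hvw
        rcases hvw with ⟨-, h'⟩ | ⟨h', -⟩
        · exact congrArg Prod.snd h'
        · exact absurd (congrArg Prod.fst h') Bool.false_ne_true
      have hcunion : (T1 ∪ T2 ∪ T3).card = T1.card + T2.card + T3.card := by
        rw [Finset.card_union_of_disjoint hd3, Finset.card_union_of_disjoint hd12]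
      have heg : eHL g = m * 2 ^ (m - 1) + r + eHL r :=
        eHL_eq_of_between (by omega) hg
      refine ⟨Sbig, hSbigcard, ?_⟩
      calc eHL g = m * 2 ^ (m - 1) + r + eHL r := heg
        _ ≤ (inE G Finset.univ).card + r + (inE G' S').card := by
            have := eHL_two_pow m ▸ hS0e
            omega
        _ = T1.card + T2.card + T3.card := by omega
        _ = (T1 ∪ T2 ∪ T3).card := hcunion.symm
        _ ≤ (inE J Sbig).card := Finset.card_le_card hsub
    -- small case : g ≤ 2^m
    · obtain ⟨S, hScard, hSe⟩ := ih1 g hsmall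
      set J := matchingJoin G G' f with hJ
      refine ⟨S.image (Prod.mk false), ?_, ?_⟩
      · exact (Finset.card_image_of_injective _ (prodmk_inj false)).trans hScard
      · have hsub : (inE G S).image (Sym2.map (Prod.mk false)) ⊆
            inE J (S.image (Prod.mk false)) := by
          intro e' he'
          obtain ⟨e, he, rfl⟩ := Finset.mem_image.mp he'
          induction e using Sym2.ind with
          | _ a b =>
            simp only [inE, Finset.mem_filter, Finset.mem_univ, true_and,
              SimpleGraph.mem_edgeSet] at he ⊢
            rw [Sym2.map_pair_eq]
            constructor
            · rw [SimpleGraph.mem_edgeSet, hJ, matchingJoin_adj]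
              exact Or.inl ⟨rfl, rfl, he.1⟩
            · intro v hv
              rw [Sym2.mem_iff] at hv
              rcases hv with rfl | rfl
              · exact Finset.mem_image.mpr ⟨a, he.2 a (Sym2.mem_mk_left a b), rfl⟩
              · exact Finset.mem_image.mpr ⟨b, he.2 b (Sym2.mem_mk_right a b), rfl⟩
        calc eHL g ≤ (inE G S).card := hSe
          _ = ((inE G S).image (Sym2.map (Prod.mk false))).card :=
              (Finset.card_image_of_injective _
                (Sym2.map.injective (prodmk_inj false))).symm
          _ ≤ (inE J (S.image (Prod.mk false))).card := Finset.card_le_card hsub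


theorem isHL_cLambda_upper (n g : ℕ) (G : SimpleGraph (HLV n)) (hG : IsHL n G)
    (hn : 8 ≤ n) (hg : g ≤ 2 ^ ((n + 1) / 2)) :
    cLambda G (g + 1) ≤ n * g - eHL g := by
  have hg2 : g ≤ 2 ^ n :=
    le_trans hg (Nat.pow_le_pow_right (by norm_num) (by omega))
  have hglt : g < 2 ^ n :=
    lt_of_le_of_lt hg (Nat.pow_lt_pow_right (by norm_num) (by omega))
  obtain ⟨S, hScard, hSe⟩ := dense_subgraph hG g hg2
  set F := touchE G S with hF
  have hcnt : F.card + (inE G S).card ≤ n * g := by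
    have := count_key G S (fun v => nbr_card_le hG v)
    rwa [hScard] at this
  have hFle : F.card ≤ n * g - eHL g := by omega
  obtain ⟨w0, hw0⟩ : ∃ w, w ∉ S := by
    by_contra h
    push_neg at h
    have hSuniv : S = Finset.univ := Finset.eq_univ_iff_forall.mpr h
    rw [hSuniv, Finset.card_univ, hlv_card] at hScard
    omega
  set H := G.deleteEdges ↑F with hH
  have hiso : ∀ v ∈ S, ∀ w, ¬ H.Adj v w := by
    intro v hv w hadj
    rw [hH, SimpleGraph.deleteEdges_adj] at hadj
    apply hadj.2
    rw [Finset.mem_coe, hF]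
    simp only [touchE, Finset.mem_filter, Finset.mem_univ, true_and]
    exact ⟨(SimpleGraph.mem_edgeSet G).mpr hadj.1, v, Sym2.mem_mk_left _ _, hv⟩
  have hreach : ∀ v ∈ S, ∀ w, H.Reachable v w → v = w := by
    intro v hv w hr
    obtain ⟨p⟩ := hr
    cases p with
    | nil => rfl
    | cons h' p => exact absurd h' (hiso v hv _)
  have hinj : Function.Injective
      (fun x : ↥(insert w0 S) => H.connectedComponentMk x.val) := by
    intro x y hxy
    have hr : H.Reachable x.val y.val := (SimpleGraph.ConnectedComponent.eq).mp hxy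
    rcases Finset.mem_insert.mp x.2 with hx | hx
    · rcases Finset.mem_insert.mp y.2 with hy | hy
      · exact Subtype.ext (hx.trans hy.symm)
      · exact Subtype.ext ((hreach _ hy _ hr.symm).symm)
    · exact Subtype.ext (hreach _ hx _ hr)
  have hcomp : g + 1 ≤ Nat.card H.ConnectedComponent := by
    have h1 := Nat.card_le_card_of_injective _ hinj
    rw [Nat.card_eq_finsetCard, Finset.card_insert_of_notMem hw0, hScard] at h1
    exact h1
  have hmem : F.card ∈ {k | ∃ Fs : Set (Sym2 (HLV n)), Fs ⊆ G.edgeSet ∧ Fs.ncard = k ∧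
      g + 1 ≤ Nat.card ((G.deleteEdges Fs).ConnectedComponent)} := by
    refine ⟨↑F, ?_, Set.ncard_coe_finset F, hcomp⟩
    intro e he
    rw [Finset.mem_coe, hF] at he
    simp only [touchE, Finset.mem_filter, Finset.mem_univ, true_and] at he
    exact he.1
  exact le_trans (Nat.sInf_le hmem) hFle
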